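/- Let L(x,v) = (1/2)⟨Av, v⟩ with A a symmetric positive definite n×n matrix with smallest eigenvalue κ > 0, so A_t(x,y) = (1/(2t))⟨A(y-x), y-x⟩. Let u : ℝⁿ → ℝ be semiconcave with constant C. If 0 < t ≤ κ/C, then the sup-convolution T̆_t u and u have the same critical points and the same critical values: 0 ∈ D⁺u(x) if and only if the maximizer in the definition of T̆_t u(x) equals x, in which case T̆_t u(x) = u(x). -/

import Mathlib

open scoped RealInnerProductSpace
open Filter

/-- The (Dini) superdifferential of `u` at `x`. -/
def superdiff {n : ℕ} (u : EuclideanSpace ℝ (Fin n) → ℝ) (x : EuclideanSpace ℝ (Fin n)) :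
    Set (EuclideanSpace ℝ (Fin n)) :=
  {p | Filter.limsup (fun y => (u y - u x - ⟪p, y - x⟫) / ‖y - x‖) (nhdsWithin x {x}ᶜ) ≤ 0}

/-- `u` is semiconcave (with linear modulus) with constant `C`. -/
def Semiconcave {n : ℕ} (u : EuclideanSpace ℝ (Fin n) → ℝ) (C : ℝ) : Prop :=
  ∀ x y : EuclideanSpace ℝ (Fin n), ∀ l : ℝ, l ∈ Set.Icc (0 : ℝ) 1 →
    l * u x + (1 - l) * u y - u (l • x + (1 - l) • y) ≤ C / 2 * l * (1 - l) * ‖x - y‖ ^ 2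

lemma norm_combo_sq {n : ℕ} (p q : EuclideanSpace ℝ (Fin n)) (a b : ℝ) (hab : a + b = 1) :
    ‖a • p + b • q‖ ^ 2 = a * ‖p‖ ^ 2 + b * ‖q‖ ^ 2 - a * b * ‖p - q‖ ^ 2 := by
  have hb : b = 1 - a := by linarith
  subst hb
  rw [← real_inner_self_eq_norm_sq, ← real_inner_self_eq_norm_sq,
    ← real_inner_self_eq_norm_sq, ← real_inner_self_eq_norm_sq]
  simp only [inner_add_left, inner_add_right, inner_sub_left, inner_sub_right,
    real_inner_smul_left, real_inner_smul_right]
  rw [real_inner_comm q p]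
  ring

lemma semiconcave_concaveOn {n : ℕ} {u : EuclideanSpace ℝ (Fin n) → ℝ} {C : ℝ}
    (hu : Semiconcave u C) :
    ConcaveOn ℝ Set.univ (fun y : EuclideanSpace ℝ (Fin n) => u y - C / 2 * ‖y‖ ^ 2) := by
  refine ⟨convex_univ, fun p _ q _ a b ha hb hab => ?_⟩
  have hb' : b = 1 - a := by linarith
  subst hb'
  have key := hu p q a ⟨ha, by linarith⟩
  have hn := norm_combo_sq p q a (1 - a) (by ring)
  simp only [smul_eq_mul]
  rw [hn]
  linarith [key]

/-- Near `x`, the difference quotient of a semiconcave function is bounded. -/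
lemma quot_bound {n : ℕ} {u : EuclideanSpace ℝ (Fin n) → ℝ} {C : ℝ} (hC : 0 ≤ C)
    (hu : Semiconcave u C) (x : EuclideanSpace ℝ (Fin n)) :
    ∃ B : ℝ, ∀ᶠ y in nhdsWithin x {x}ᶜ, |(u y - u x) / ‖y - x‖| ≤ B := by
  obtain ⟨K, s, hs, hlip⟩ := (semiconcave_concaveOn hu).locallyLipschitzOn isOpen_univ
    (Set.mem_univ x)
  rw [nhdsWithin_univ] at hs
  have hxs : x ∈ s := mem_of_mem_nhds hs
  refine ⟨(K : ℝ) + C / 2 * (2 * ‖x‖ + 1), ?_⟩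
  filter_upwards [mem_nhdsWithin_of_mem_nhds hs,
    mem_nhdsWithin_of_mem_nhds (Metric.ball_mem_nhds x one_pos), self_mem_nhdsWithin]
    with z hzs hzb hzx
  have hzx' : z ≠ x := hzx
  have hn : 0 < ‖z - x‖ := by rwa [norm_pos_iff, sub_ne_zero]
  have hdist : ‖z - x‖ < 1 := by rwa [Metric.mem_ball, dist_eq_norm] at hzb
  have hlipb : |(u z - C / 2 * ‖z‖ ^ 2) - (u x - C / 2 * ‖x‖ ^ 2)| ≤ (K : ℝ) * ‖z - x‖ := by
    have h0 := hlip.dist_le_mul z hzs x hxs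
    simp only [Real.dist_eq, dist_eq_norm] at h0
    exact h0
  obtain ⟨hlip1, hlip2⟩ := abs_le.mp hlipb
  have hd : |‖z‖ - ‖x‖| ≤ ‖z - x‖ := abs_norm_sub_norm_le z x
  obtain ⟨hd1, hd2⟩ := abs_le.mp hd
  have hzn : ‖z‖ ≤ ‖x‖ + 1 := by linarith
  rw [abs_div, abs_norm, div_le_iff₀ hn, abs_le]
  have hK0 : (0 : ℝ) ≤ (K : ℝ) := K.2
  have hab : (0:ℝ) ≤ ‖z‖ + ‖x‖ := by positivity
  have hup : ‖z‖ + ‖x‖ ≤ 2 * ‖x‖ + 1 := by linarith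
  have m1 : (‖z‖ - ‖x‖) * (‖z‖ + ‖x‖) ≤ ‖z - x‖ * (‖z‖ + ‖x‖) :=
    mul_le_mul_of_nonneg_right hd2 hab
  have m2 : (‖x‖ - ‖z‖) * (‖z‖ + ‖x‖) ≤ ‖z - x‖ * (‖z‖ + ‖x‖) :=
    mul_le_mul_of_nonneg_right (by linarith) hab
  have m3 : ‖z - x‖ * (‖z‖ + ‖x‖) ≤ ‖z - x‖ * (2 * ‖x‖ + 1) :=
    mul_le_mul_of_nonneg_left hup hn.le
  have hsq1 : ‖z‖ ^ 2 - ‖x‖ ^ 2 ≤ (2 * ‖x‖ + 1) * ‖z - x‖ := by nlinarith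
  have hsq2 : ‖x‖ ^ 2 - ‖z‖ ^ 2 ≤ (2 * ‖x‖ + 1) * ‖z - x‖ := by nlinarith
  have hq2 : C / 2 * (‖z‖ ^ 2 - ‖x‖ ^ 2) ≤ C / 2 * ((2 * ‖x‖ + 1) * ‖z - x‖) :=
    mul_le_mul_of_nonneg_left hsq1 (by linarith)
  have hq3 : C / 2 * (‖x‖ ^ 2 - ‖z‖ ^ 2) ≤ C / 2 * ((2 * ‖x‖ + 1) * ‖z - x‖) :=
    mul_le_mul_of_nonneg_left hsq2 (by linarith)
  constructor
  · linarith
  · linarith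

lemma key_bound {n : ℕ} {u : EuclideanSpace ℝ (Fin n) → ℝ} {C : ℝ} (hC : 0 ≤ C)
    (hu : Semiconcave u C) (x : EuclideanSpace ℝ (Fin n)) (h : 0 ∈ superdiff u x)
    (y : EuclideanSpace ℝ (Fin n)) : u y ≤ u x + C / 2 * ‖y - x‖ ^ 2 := by
  simp only [superdiff, Set.mem_setOf_eq, inner_zero_left, sub_zero] at h
  obtain ⟨B, hB⟩ := quot_bound hC hu x
  have hbdd : IsBoundedUnder (· ≤ ·) (nhdsWithin x {x}ᶜ)
      (fun y => (u y - u x) / ‖y - x‖) := by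
    refine ⟨B, ?_⟩
    rw [Filter.eventually_map]
    exact hB.mono fun z hz => (le_abs_self _).trans hz
  have heps : ∀ ε > (0:ℝ), ∀ᶠ z in nhdsWithin x {x}ᶜ, (u z - u x) / ‖z - x‖ < ε :=
    fun ε hε => Filter.eventually_lt_of_limsup_lt (lt_of_le_of_lt h hε) hbdd
  rcases eq_or_ne y x with rfl | hyx
  · simp [sub_self]
  · have hs0 : 0 < ‖y - x‖ := by rwa [norm_pos_iff, sub_ne_zero]
    set s0 := ‖y - x‖ with hs0def
    refine le_of_forall_pos_le_add fun δ hδ => ?_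
    set ε := δ / s0 with hε
    have hεpos : 0 < ε := by positivity
    have hev := heps ε hεpos
    rw [Filter.eventually_iff, Metric.mem_nhdsWithin_iff] at hev
    obtain ⟨δ', hδ', hsub⟩ := hev
    set l := min (1/2 : ℝ) (δ' / (2 * s0)) with hl
    have hl0 : 0 < l := by positivity
    have hl1 : l ≤ 1/2 := min_le_left _ _
    have hlδ : l * s0 < δ' := by
      have h1 : l ≤ δ' / (2 * s0) := min_le_right _ _
      have h2 := mul_le_mul_of_nonneg_right h1 hs0.le
      have h3 : δ' / (2 * s0) * s0 = δ' / 2 := by field_simp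
      linarith
    set z := l • y + (1 - l) • x with hz
    have hzx : z - x = l • (y - x) := by
      rw [hz, sub_smul, one_smul, smul_sub]; abel
    have hzn : ‖z - x‖ = l * s0 := by
      rw [hzx, norm_smul, Real.norm_eq_abs, abs_of_pos hl0]
    have hzmem : z ∈ Metric.ball x δ' ∩ {x}ᶜ := by
      constructor
      · rw [Metric.mem_ball, dist_eq_norm, hzn]; exact hlδ
      · simp only [Set.mem_compl_iff, Set.mem_singleton_iff]
        intro hzeq
        rw [hzeq, sub_self] at hzn
        simp only [norm_zero] at hzn
        nlinarith
    have hin : (u z - u x) / ‖z - x‖ < ε := hsub hzmem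
    rw [hzn, div_lt_iff₀ (by positivity)] at hin
    have hk := hu y x l ⟨hl0.le, by linarith⟩
    have hεs : ε * s0 = δ := div_mul_cancel₀ δ hs0.ne'
    have h4 : l * (u y - u x) ≤ l * (C / 2 * s0 ^ 2 + δ) := by
      nlinarith [hk, hin, mul_nonneg (mul_nonneg (by linarith : (0:ℝ) ≤ C/2) hl0.le)
        (mul_nonneg hl0.le (sq_nonneg s0))]
    have := (mul_le_mul_iff_right₀ hl0).mp h4
    linarith

theorem stmt9 {n : ℕ} (A : EuclideanSpace ℝ (Fin n) →L[ℝ] EuclideanSpace ℝ (Fin n))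
    (hsymm : ∀ v w, ⟪A v, w⟫ = ⟪v, A w⟫)
    (κ : ℝ) (hκ : 0 < κ) (hcoer : ∀ v, κ * ‖v‖ ^ 2 ≤ ⟪A v, v⟫)
    (hκmin : ∃ v : EuclideanSpace ℝ (Fin n), v ≠ 0 ∧ ⟪A v, v⟫ = κ * ‖v‖ ^ 2)
    (u : EuclideanSpace ℝ (Fin n) → ℝ) (C : ℝ) (hC : 0 < C) (hu : Semiconcave u C)
    (t : ℝ) (ht : 0 < t) (ht' : t ≤ κ / C) (x : EuclideanSpace ℝ (Fin n)) :
    (0 ∈ superdiff u x ↔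
      IsMaxOn (fun y => u y - 1 / (2 * t) * ⟪A (y - x), y - x⟫) Set.univ x) ∧
    (0 ∈ superdiff u x →
      sSup (Set.range fun y => u y - 1 / (2 * t) * ⟪A (y - x), y - x⟫) = u x) := by
  have hgx : u x - 1 / (2 * t) * ⟪A (x - x), x - x⟫ = u x := by
    simp [sub_self]
  have hCt : t * C ≤ κ := (le_div_iff₀ hC).mp ht'
  have hforward : 0 ∈ superdiff u x →
      IsMaxOn (fun y => u y - 1 / (2 * t) * ⟪A (y - x), y - x⟫) Set.univ x := by
    intro h
    rw [isMaxOn_iff]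
    intro y _
    rw [hgx]
    have h1 : κ * ‖y - x‖ ^ 2 ≤ ⟪A (y - x), y - x⟫ := hcoer _
    have h2 : u y ≤ u x + C / 2 * ‖y - x‖ ^ 2 := key_bound hC.le hu x h y
    have e1 : 1 / (2 * t) * (κ * ‖y - x‖ ^ 2) ≤ 1 / (2 * t) * ⟪A (y - x), y - x⟫ :=
      mul_le_mul_of_nonneg_left h1 (by positivity)
    have e2 : C / 2 * ‖y - x‖ ^ 2 ≤ 1 / (2 * t) * (κ * ‖y - x‖ ^ 2) := by
      have hq : C / 2 ≤ κ / (2 * t) := by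
        rw [div_le_div_iff₀ (by norm_num) (by positivity)]
        nlinarith
      have h5 := mul_le_mul_of_nonneg_right hq (sq_nonneg ‖y - x‖)
      calc C / 2 * ‖y - x‖ ^ 2 ≤ κ / (2 * t) * ‖y - x‖ ^ 2 := h5
        _ = 1 / (2 * t) * (κ * ‖y - x‖ ^ 2) := by ring
    linarith
  constructor
  · constructor
    · exact hforward
    · intro hm
      have hineq : ∀ y, u y - u x ≤ 1 / (2 * t) * ⟪A (y - x), y - x⟫ := by
        intro y
        have := isMaxOn_iff.mp hm y (Set.mem_univ y)
        rw [hgx] at this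
        linarith
      simp only [superdiff, Set.mem_setOf_eq, inner_zero_left, sub_zero]
      rcases (nhdsWithin x {x}ᶜ).eq_or_neBot with hbot | hne
      · rw [hbot]
        have huniv : {a : ℝ | ∀ᶠ (y : EuclideanSpace ℝ (Fin n)) in (⊥ : Filter _),
            (u y - u x) / ‖y - x‖ ≤ a} = Set.univ := by
          simp [Filter.eventually_bot]
        rw [Filter.limsup, Filter.limsSup]
        simp only [Filter.eventually_map]
        rw [huniv, Real.sInf_of_not_bddBelow not_bddBelow_univ]
      · have hev : ∀ ε > (0:ℝ), ∀ᶠ y in nhdsWithin x {x}ᶜ, (u y - u x) / ‖y - x‖ ≤ ε := by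
          intro ε hε
          have hδpos : (0:ℝ) < 2 * t * ε / (‖A‖ + 1) := by positivity
          filter_upwards [mem_nhdsWithin_of_mem_nhds (Metric.ball_mem_nhds x hδpos),
            self_mem_nhdsWithin] with y hyb hyx
          have hy : y ≠ x := hyx
          have hn : 0 < ‖y - x‖ := by rwa [norm_pos_iff, sub_ne_zero]
          have hb : ‖y - x‖ < 2 * t * ε / (‖A‖ + 1) := by
            rwa [Metric.mem_ball, dist_eq_norm] at hyb
          have h5 : (‖A‖ + 1) * ‖y - x‖ < 2 * t * ε := by
            rw [lt_div_iff₀ (by positivity)] at hb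
            linarith
          have hA : ⟪A (y - x), y - x⟫ ≤ ‖A‖ * (‖y - x‖ * ‖y - x‖) := by
            calc ⟪A (y - x), y - x⟫ ≤ ‖A (y - x)‖ * ‖y - x‖ := real_inner_le_norm _ _
              _ ≤ ‖A‖ * ‖y - x‖ * ‖y - x‖ :=
                mul_le_mul_of_nonneg_right (A.le_opNorm _) (norm_nonneg _)
              _ = ‖A‖ * (‖y - x‖ * ‖y - x‖) := by ring
          have h6 : ⟪A (y - x), y - x⟫ ≤ (‖A‖ + 1) * ‖y - x‖ * ‖y - x‖ := by
            nlinarith [mul_pos hn hn]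
          have h7 : (‖A‖ + 1) * ‖y - x‖ * ‖y - x‖ < 2 * t * ε * ‖y - x‖ :=
            mul_lt_mul_of_pos_right h5 hn
          have hineq2 : (u y - u x) * (2 * t) ≤ ⟪A (y - x), y - x⟫ := by
            have h8 := hineq y
            rw [one_div, inv_mul_eq_div, le_div_iff₀ (by positivity)] at h8
            exact h8
          rw [div_le_iff₀ hn]
          nlinarith [hineq2, h6, h7, ht]
        obtain ⟨B, hB⟩ := quot_bound hC.le hu x
        have hcob : IsCoboundedUnder (· ≤ ·) (nhdsWithin x {x}ᶜ)
            (fun y => (u y - u x) / ‖y - x‖) :=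
          isCoboundedUnder_le_of_eventually_le _
            (hB.mono fun z hz => (abs_le.mp hz).1)
        refine le_of_forall_pos_le_add fun ε hε => ?_
        have := Filter.limsup_le_of_le hcob (hev ε hε)
        linarith
  · intro h
    have hmax := hforward h
    refine IsGreatest.csSup_eq ⟨⟨x, hgx⟩, ?_⟩
    rintro z ⟨y, rfl⟩
    exact (isMaxOn_iff.mp hmax y (Set.mem_univ y)).trans_eq hgx
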